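/- arXiv:2105.00111 — 10 statements merged into one kernel-verified Lean document; each statement's English description precedes it below -/
import Mathlib

section
/- Completeness of the UMPS-to-communication-delay reduction: given a UMPS instance I with n jobs, m machines, and a feasible schedule of makespan L, the derived communication-delay instance I' (jobs j'_1,...,j'_n with the same processing times and zero-delay precedences inherited from I, plus m unit-length dummy jobs j*_i with precedence j'_l ≺ j*_i and delay C_∞ for each job l with M(l)=i) admits a feasible schedule on m machines with makespan at most L+1. -/
/-- Completeness of the UMPS-to-communication-delay reduction.
Given a UMPS instance `I` (jobs `Fin n`, processing times `p`, machine assignment `M`,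
precedences `prec`) with a feasible schedule `s` of makespan at most `L`, the derived
communication-delay instance `I'` (jobs `Fin n ⊕ Fin m`: the original jobs with their
processing times and zero-delay precedences, plus `m` unit-length dummy jobs `.inr i`
with precedence `j'_l ≺ j*_i` and delay `C∞ = n * ∑ p` whenever `M l = i`) admits a
feasible schedule on `m` machines with makespan at most `L + 1`. -/
theorem reduction_completeness
    (n m : ℕ) (p : Fin n → ℕ) (hp : ∀ l, 0 < p l)
    (M : Fin n → Fin m)
    (prec : Fin n → Fin n → Prop)
    (L : ℕ) (s : Fin n → ℕ)
    (hfeas_prec : ∀ u v, prec u v → s u + p u ≤ s v)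
    (hfeas_mach : ∀ u v, u ≠ v → M u = M v → (s u + p u ≤ s v ∨ s v + p v ≤ s u))
    (hmakespan : ∀ l, s l + p l ≤ L) :
    ∃ (A : Fin n ⊕ Fin m → Fin m) (σ : Fin n ⊕ Fin m → ℕ),
      -- precedences among the original jobs have communication delay 0
      (∀ u v, prec u v → σ (.inl u) + p u ≤ σ (.inl v)) ∧
      -- precedences to dummy jobs have communication delay C∞ = n * ∑ p
      (∀ l : Fin n,
        (A (.inl l) = A (.inr (M l)) → σ (.inl l) + p l ≤ σ (.inr (M l))) ∧
        (A (.inl l) ≠ A (.inr (M l)) →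
          σ (.inl l) + p l + n * (∑ j, p j) ≤ σ (.inr (M l)))) ∧
      -- jobs on the same machine occupy disjoint time intervals
      (∀ j k : Fin n ⊕ Fin m, j ≠ k → A j = A k →
        (σ j + Sum.elim p (fun _ => 1) j ≤ σ k ∨
         σ k + Sum.elim p (fun _ => 1) k ≤ σ j)) ∧
      -- makespan at most L + 1
      (∀ j : Fin n ⊕ Fin m, σ j + Sum.elim p (fun _ => 1) j ≤ L + 1) := by
  refine ⟨Sum.elim M id, Sum.elim s (fun _ => L), ?_, ?_, ?_, ?_⟩
  · intro u v h; exact hfeas_prec u v h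
  · intro l
    refine ⟨fun _ => hmakespan l, fun h => absurd rfl h⟩
  · rintro (u | i) (v | j) hne hA
    · exact hfeas_mach u v (by simpa using hne) (by simpa using hA)
    · left; simp only [Sum.elim_inl, Sum.elim_inr] at *
      exact hmakespan u
    · right; simp only [Sum.elim_inl, Sum.elim_inr] at *
      exact hmakespan v
    · exact absurd (by simpa using hA : i = j) (by simpa using hne)
  · rintro (u | i)
    · exact le_trans (hmakespan u) (Nat.le_succ L)
    · simp
end

section
/- Soundness of the UMPS-to-communication-delay reduction: if the derived communication-delay instance I' (as in the reduction, with C_∞ = n·∑_l p(l)) has a feasible schedule with makespan L ≤ ∑_{l=1}^n p(l), then for every machine index i ∈ [m] of the original UMPS instance, all jobs j'_l with M(l)=i are scheduled on the same machine of I' as the dummy job j*_i. -/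
/-- Soundness of the UMPS-to-communication-delay reduction (key fact).
If the derived communication-delay instance `I'` (jobs `Fin n ⊕ Fin m`, original jobs
with processing times `p` and zero-delay precedences, dummy unit jobs `.inr i` with
precedence from every `j'_l` with `M l = i` and delay `C∞ = n * ∑ p`) has a feasible
schedule (machine assignment `A`, start times `σ`) with makespan `L ≤ ∑ p`, then for
every machine index `i` every job `j'_l` with `M l = i` is scheduled on the same
machine of `I'` as the dummy job `j*_i`. -/
theorem reduction_soundness_same_machine
    (n m : ℕ) (p : Fin n → ℕ) (hp : ∀ l, 0 < p l)
    (M : Fin n → Fin m)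
    (prec : Fin n → Fin n → Prop)
    (L : ℕ) (hL : L ≤ ∑ j, p j)
    (A : Fin n ⊕ Fin m → ℕ) (σ : Fin n ⊕ Fin m → ℕ)
    -- zero-delay precedences among original jobs
    (hprec0 : ∀ u v, prec u v → σ (.inl u) + p u ≤ σ (.inl v))
    -- dummy-job precedences with communication delay C∞ = n * ∑ p
    (hdummy : ∀ l : Fin n,
      (A (.inl l) = A (.inr (M l)) → σ (.inl l) + p l ≤ σ (.inr (M l))) ∧
      (A (.inl l) ≠ A (.inr (M l)) →
        σ (.inl l) + p l + n * (∑ j, p j) ≤ σ (.inr (M l))))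
    -- jobs on the same machine occupy disjoint intervals
    (hmach : ∀ j k : Fin n ⊕ Fin m, j ≠ k → A j = A k →
      (σ j + Sum.elim p (fun _ => 1) j ≤ σ k ∨
       σ k + Sum.elim p (fun _ => 1) k ≤ σ j))
    -- makespan at most L
    (hmakespan : ∀ j : Fin n ⊕ Fin m, σ j + Sum.elim p (fun _ => 1) j ≤ L) :
    ∀ l : Fin n, A (.inl l) = A (.inr (M l)) := by
  intro l
  by_contra hne
  have h := (hdummy l).2 hne
  have hmk := hmakespan (.inr (M l))
  have hn : 1 ≤ n := l.pos
  have hS : (∑ j, p j) ≤ n * (∑ j, p j) := Nat.le_mul_of_pos_left _ l.pos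
  have hpl := hp l
  omega
end

section
/- Soundness of the UMPS-to-communication-delay reduction (schedule extraction): if the communication-delay instance I' derived from a UMPS instance I admits a feasible schedule with makespan L ≤ ∑_{l=1}^n p(l), then I admits a feasible UMPS schedule with makespan at most L. -/
/-- Soundness of the UMPS-to-communication-delay reduction
(schedule extraction). If the derived communication-delay instance `I'` admits a
feasible schedule (machine assignment `A`, start times `σ`) with makespan
`L ≤ ∑ p`, then the original UMPS instance `I` admits a feasible schedule with
makespan at most `L`. -/
theorem reduction_soundness_extraction
    (n m : ℕ) (p : Fin n → ℕ) (hp : ∀ l, 0 < p l)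
    (M : Fin n → Fin m)
    (prec : Fin n → Fin n → Prop)
    (L : ℕ) (hL : L ≤ ∑ j, p j)
    (A : Fin n ⊕ Fin m → ℕ) (σ : Fin n ⊕ Fin m → ℕ)
    -- zero-delay precedences among original jobs
    (hprec0 : ∀ u v, prec u v → σ (.inl u) + p u ≤ σ (.inl v))
    -- dummy-job precedences with communication delay C∞ = n * ∑ p
    (hdummy : ∀ l : Fin n,
      (A (.inl l) = A (.inr (M l)) → σ (.inl l) + p l ≤ σ (.inr (M l))) ∧
      (A (.inl l) ≠ A (.inr (M l)) →
        σ (.inl l) + p l + n * (∑ j, p j) ≤ σ (.inr (M l))))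
    -- jobs on the same machine occupy disjoint intervals
    (hmach : ∀ j k : Fin n ⊕ Fin m, j ≠ k → A j = A k →
      (σ j + Sum.elim p (fun _ => 1) j ≤ σ k ∨
       σ k + Sum.elim p (fun _ => 1) k ≤ σ j))
    -- makespan at most L
    (hmakespan : ∀ j : Fin n ⊕ Fin m, σ j + Sum.elim p (fun _ => 1) j ≤ L) :
    ∃ s : Fin n → ℕ,
      (∀ u v, prec u v → s u + p u ≤ s v) ∧
      (∀ u v, u ≠ v → M u = M v → (s u + p u ≤ s v ∨ s v + p v ≤ s u)) ∧
      (∀ l, s l + p l ≤ L) := by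
  have hsame : ∀ l : Fin n, A (.inl l) = A (.inr (M l)) := by
    intro l
    by_contra hne
    have h1 := (hdummy l).2 hne
    have h2 := hmakespan (.inr (M l))
    simp only [Sum.elim_inr] at h2
    have hn : 1 ≤ n := l.pos
    have : (∑ j, p j) ≤ n * (∑ j, p j) := Nat.le_mul_of_pos_left _ hn
    omega
  refine ⟨fun l => σ (.inl l), hprec0, ?_, ?_⟩
  · intro u v huv hM
    have hA : A (.inl u) = A (.inl v) := by
      rw [hsame u, hsame v, hM]
    have := hmach (.inl u) (.inl v) (by simp [huv]) hA
    simpa using this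
  · intro l
    have := hmakespan (.inl l)
    simpa using this
end

section
/- In the UMPS-to-related-machines reduction with κ = 10n³m, for every l ∈ [n] with i = M(l), the total number of jobs of 𝒥_l that can be processed within time n by all machines in ⋃_{j>i} ℳ_j is at most (nm/κ)·κ^{2(m−i)} ≤ κ^{2(m−i)}/(10n²). Consequently, in any schedule of makespan at most n, at most a γ = 1/(10n²) fraction of the jobs in 𝒥_l are processed on machines outside ℳ_i. -/
/-- In the UMPS-to-related-machines reduction with `κ = 10n³m`, for a
job group `𝒥_l` with `i = M(l)`, the total number of jobs of `𝒥_l` (each of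
processing requirement `κ^(i-1)`) that all machines in `⋃_{j>i} ℳ_j` (where `ℳ_j`
has `κ^(2(m-j))` machines of speed `κ^(j-1)`) can process within time `n` is at most
`(nm/κ)·κ^(2(m-i)) ≤ κ^(2(m-i))/(10n²)`; i.e. at most a `γ = 1/(10n²)` fraction of
the `κ^(2(m-i))` jobs of `𝒥_l` can be processed on machines outside `ℳ_i`
in any schedule of makespan at most `n`. -/
theorem related_machines_fast_machines_bound
    (n m : ℕ) (hn : 1 ≤ n) (hm : 1 ≤ m)
    (i : ℕ) (hi : 1 ≤ i) (him : i ≤ m)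
    (κ : ℕ) (hκ : κ = 10 * n ^ 3 * m) :
    (∑ j ∈ Finset.Icc (i + 1) m,
        (n : ℝ) * (κ : ℝ) ^ (2 * (m - j)) * (κ : ℝ) ^ (j - 1) / (κ : ℝ) ^ (i - 1))
      ≤ ((n : ℝ) * m / κ) * (κ : ℝ) ^ (2 * (m - i)) ∧
    ((n : ℝ) * m / κ) * (κ : ℝ) ^ (2 * (m - i))
      ≤ (1 / (10 * (n : ℝ) ^ 2)) * (κ : ℝ) ^ (2 * (m - i)) := by
  have hn' : (0:ℝ) < n := by exact_mod_cast hn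
  have hm' : (0:ℝ) < m := by exact_mod_cast hm
  have hκpos : (0:ℝ) < κ := by
    have : 0 < κ := by
      subst hκ; positivity
    exact_mod_cast this
  have hκ1 : (1:ℝ) ≤ κ := by
    have h0 : 0 < 10 * n ^ 3 * m := by positivity
    have : 1 ≤ κ := by omega
    exact_mod_cast this
  constructor
  · rcases lt_or_ge i m with hlt | hge
    · -- nonempty case
      have hexp : 1 ≤ 2 * (m - i) := by omega
      have hterm : ∀ j ∈ Finset.Icc (i + 1) m,
          (n : ℝ) * (κ : ℝ) ^ (2 * (m - j)) * (κ : ℝ) ^ (j - 1) / (κ : ℝ) ^ (i - 1)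
            ≤ (n : ℝ) * (κ : ℝ) ^ (2 * (m - i) - 1) := by
        intro j hj
        simp only [Finset.mem_Icc] at hj
        have h1 : (κ : ℝ) ^ (2 * (m - j)) * (κ : ℝ) ^ (j - 1)
            = (κ : ℝ) ^ (2 * (m - j) + (j - 1)) := (pow_add _ _ _).symm
        have h2 : i - 1 ≤ 2 * (m - j) + (j - 1) := by omega
        have h3 : (κ : ℝ) ^ (2 * (m - j) + (j - 1)) / (κ : ℝ) ^ (i - 1)
            = (κ : ℝ) ^ (2 * (m - j) + (j - 1) - (i - 1)) :=
          (pow_sub₀ _ (ne_of_gt hκpos) h2).symm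
        rw [mul_assoc, mul_div_assoc, h1, h3]
        have h4 : 2 * (m - j) + (j - 1) - (i - 1) ≤ 2 * (m - i) - 1 := by omega
        have := pow_le_pow_right₀ hκ1 h4
        nlinarith [this, hn']
      calc (∑ j ∈ Finset.Icc (i + 1) m,
              (n : ℝ) * (κ : ℝ) ^ (2 * (m - j)) * (κ : ℝ) ^ (j - 1) / (κ : ℝ) ^ (i - 1))
          ≤ ∑ j ∈ Finset.Icc (i + 1) m, (n : ℝ) * (κ : ℝ) ^ (2 * (m - i) - 1) :=
            Finset.sum_le_sum hterm
        _ = ((Finset.Icc (i + 1) m).card : ℝ) * ((n : ℝ) * (κ : ℝ) ^ (2 * (m - i) - 1)) := by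
            rw [Finset.sum_const, nsmul_eq_mul]
        _ ≤ (m : ℝ) * ((n : ℝ) * (κ : ℝ) ^ (2 * (m - i) - 1)) := by
            have hcard : (Finset.Icc (i + 1) m).card ≤ m := by
              rw [Nat.card_Icc]; omega
            have : ((Finset.Icc (i + 1) m).card : ℝ) ≤ (m : ℝ) := by exact_mod_cast hcard
            have hpos : (0:ℝ) ≤ (n : ℝ) * (κ : ℝ) ^ (2 * (m - i) - 1) := by positivity
            nlinarith
        _ = ((n : ℝ) * m / κ) * (κ : ℝ) ^ (2 * (m - i)) := by
            have : (κ : ℝ) ^ (2 * (m - i)) = (κ : ℝ) ^ (2 * (m - i) - 1) * κ := by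
              rw [← pow_succ]; congr 1; omega
            rw [this]; field_simp
    · -- empty sum
      have : Finset.Icc (i + 1) m = ∅ := by
        rw [Finset.Icc_eq_empty_iff]; omega
      rw [this, Finset.sum_empty]
      positivity
  · have heq : (n : ℝ) * m / κ = 1 / (10 * (n : ℝ) ^ 2) := by
      subst hκ
      have : ((10 * n ^ 3 * m : ℕ) : ℝ) = 10 * (n:ℝ) ^ 3 * m := by push_cast; ring
      rw [this]
      field_simp
    rw [heq]
end

section
/- Under the hypotheses of the previous statement with γ·L ≤ 1/(10n) and n ≥ 1, every machine fractionally processes at most 2 distinct jobs with positive amount in any single time slot: for every i ∈ [m] and t ∈ [L], |{l ∈ J(i) : x_{l,t} > 0}| ≤ 2. -/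
open scoped Classical

/-- Under the hypotheses of the greedy fractional schedule (as in the
previous statement) together with `γ·L ≤ 1/(10n)` and `n ≥ 1`, every machine
fractionally processes at most 2 distinct jobs with positive amount in any single
time slot. -/
theorem fractional_greedy_two_jobs_per_slot
    (n L : ℕ) (hn : 1 ≤ n) (γ : ℝ) (hγ : 0 ≤ γ)
    (hγL : γ * L ≤ 1 / (10 * n))
    (x : ℕ → ℕ → ℝ) (M : ℕ → ℕ) (ts te : ℕ → ℕ)
    (hnonneg : ∀ l t, 0 ≤ x l t)
    (hsupp : ∀ l t, 0 < x l t → l < n ∧ 1 ≤ t ∧ t ≤ L)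
    (hts : ∀ l t, 0 < x l t → ts l ≤ t)
    (hte : ∀ l t, 0 < x l t → t ≤ te l)
    (htot_lb : ∀ l, l < n → 1 - γ ≤ ∑ t ∈ Finset.Icc 1 L, x l t)
    (htot_ub : ∀ l, l < n → ∑ t ∈ Finset.Icc 1 L, x l t ≤ 1)
    (hcap : ∀ i t, ∑ l ∈ (Finset.range n).filter (fun l => M l = i), x l t ≤ 1)
    (prec : ℕ → ℕ → Prop)
    (hprec : ∀ l₁ l₂ t t', prec l₁ l₂ → 0 < x l₁ t → t' ≤ t → x l₂ t' = 0)
    (hgreedy1 : ∀ i t l₁ l₂,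
      l₁ < n → l₂ < n → M l₁ = i → M l₂ = i →
      ts l₁ ≤ t → t ≤ te l₁ → ts l₂ ≤ t → t ≤ te l₂ →
      (te l₁ < te l₂ ∨ (te l₁ = te l₂ ∧ l₁ < l₂)) →
      0 < x l₂ t →
      ∑ t' ∈ Finset.Icc 1 t, x l₁ t' = ∑ t' ∈ Finset.Icc 1 L, x l₁ t')
    (hgreedy2 : ∀ i t, 1 ≤ t → t ≤ L →
      (∑ l ∈ (Finset.range n).filter (fun l => M l = i ∧ ts l ≤ t ∧ t ≤ te l), x l t) < 1 →
      ∀ l, l < n → M l = i → ts l ≤ t → t ≤ te l →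
        ∑ t' ∈ Finset.Icc 1 t, x l t' = ∑ t' ∈ Finset.Icc 1 L, x l t') :
    ∀ i t, 1 ≤ t → t ≤ L →
      ((Finset.range n).filter (fun l => M l = i ∧ 0 < x l t)).card ≤ 2 := by

  -- abbreviations
  have hcum_nonneg : ∀ l s, 0 ≤ ∑ t' ∈ Finset.Icc 1 s, x l t' :=
    fun l s => Finset.sum_nonneg fun t' _ => hnonneg l t'
  have hmono : ∀ l k, (∑ t' ∈ Finset.Icc 1 k, x l t') ≤ ∑ t' ∈ Finset.Icc 1 (k+1), x l t' :=
    fun l k => Finset.sum_le_sum_of_subset_of_nonneg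
      (Finset.Icc_subset_Icc le_rfl (Nat.le_succ k)) (fun t' _ _ => hnonneg l t')
  have hstep : ∀ l k, (∑ t' ∈ Finset.Icc 1 (k+1), x l t')
      = (∑ t' ∈ Finset.Icc 1 k, x l t') + x l (k+1) := by
    intro l k
    exact Finset.sum_Icc_succ_top (Nat.le_add_left 1 k) _
  have htri : ∀ a b : ℕ, a ≠ b →
      (te a < te b ∨ (te a = te b ∧ a < b)) ∨ (te b < te a ∨ (te b = te a ∧ b < a)) := by
    intro a b h; omega
  -- THE KEY POTENTIAL BOUND
  have key : ∀ (s : ℕ) (i : ℕ),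
      ∑ l ∈ (Finset.range n).filter
        (fun l => M l = i ∧ (∑ t' ∈ Finset.Icc 1 s, x l t') < ∑ t' ∈ Finset.Icc 1 L, x l t'),
        (∑ t' ∈ Finset.Icc 1 s, x l t') ≤ (s : ℝ) * γ := by
    intro s
    induction s with
    | zero => intro i; simp
    | succ k ih =>
      intro i
      set U : Finset ℕ := (Finset.range n).filter
        (fun l => M l = i ∧ (∑ t' ∈ Finset.Icc 1 (k+1), x l t') < ∑ t' ∈ Finset.Icc 1 L, x l t')
        with hUdef
      set V : Finset ℕ := (Finset.range n).filter
        (fun l => M l = i ∧ (∑ t' ∈ Finset.Icc 1 k, x l t') < ∑ t' ∈ Finset.Icc 1 L, x l t')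
        with hVdef
      have hUV : U ⊆ V := by
        intro l hl
        simp only [hUdef, hVdef, Finset.mem_filter] at hl ⊢
        exact ⟨hl.1, hl.2.1, lt_of_le_of_lt (hmono l k) hl.2.2⟩
      by_cases hpos : ∃ l₀ ∈ U, 0 < x l₀ (k+1)
      · obtain ⟨l₀, hl₀U, hx₀⟩ := hpos
        have hl₀mem := hl₀U
        simp only [hUdef, Finset.mem_filter, Finset.mem_range] at hl₀mem
        obtain ⟨hl₀n, hMl₀, hunf₀⟩ := hl₀mem
        have hkL : k + 1 ≤ L := (hsupp l₀ (k+1) hx₀).2.2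
        have hts₀ : ts l₀ ≤ k + 1 := hts l₀ (k+1) hx₀
        have hte₀ : k + 1 ≤ te l₀ := hte l₀ (k+1) hx₀
        -- the slot is full
        have hfull : 1 ≤ ∑ l ∈ (Finset.range n).filter
            (fun l => M l = i ∧ ts l ≤ k+1 ∧ k+1 ≤ te l), x l (k+1) := by
          by_contra h'
          push_neg at h'
          have := hgreedy2 i (k+1) (Nat.le_add_left 1 k) hkL h' l₀ hl₀n hMl₀ hts₀ hte₀
          exact absurd this (ne_of_lt hunf₀)
        -- there is another positive job a'
        have hA₀ : l₀ ∈ (Finset.range n).filter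
            (fun l => M l = i ∧ ts l ≤ k+1 ∧ k+1 ≤ te l) := by
          simp only [Finset.mem_filter, Finset.mem_range]
          exact ⟨hl₀n, hMl₀, hts₀, hte₀⟩
        have ha' : ∃ a' ∈ (Finset.range n).filter
            (fun l => M l = i ∧ ts l ≤ k+1 ∧ k+1 ≤ te l), a' ≠ l₀ ∧ 0 < x a' (k+1) := by
          by_contra h'
          push_neg at h'
          have hrest : ∑ l ∈ ((Finset.range n).filter
              (fun l => M l = i ∧ ts l ≤ k+1 ∧ k+1 ≤ te l)).erase l₀, x l (k+1) ≤ 0 := by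
            apply Finset.sum_nonpos
            intro l hl
            exact h' l (Finset.mem_of_mem_erase hl) (Finset.ne_of_mem_erase hl)
          have hsplit := Finset.add_sum_erase _ (fun l => x l (k+1)) hA₀
          have h1 : 1 ≤ x l₀ (k+1) := by
            calc (1:ℝ) ≤ _ := hfull
            _ = x l₀ (k+1) + _ := hsplit.symm
            _ ≤ x l₀ (k+1) := by linarith
          have h2 : x l₀ (k+1) ≤ ∑ t' ∈ Finset.Icc 1 (k+1), x l₀ t' := by
            apply Finset.single_le_sum (fun t' _ => hnonneg l₀ t')
            simp [Nat.le_add_left]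
          have h3 := htot_ub l₀ hl₀n
          linarith
        obtain ⟨a', ha'A, ha'ne, hxa'⟩ := ha'
        simp only [Finset.mem_filter, Finset.mem_range] at ha'A
        obtain ⟨ha'n, hMa', htsa', htea'⟩ := ha'A
        -- a' finishes at slot k+1
        have hfa' : ∑ t' ∈ Finset.Icc 1 (k+1), x a' t' = ∑ t' ∈ Finset.Icc 1 L, x a' t' := by
          rcases htri a' l₀ ha'ne with hr | hr
          · exact hgreedy1 i (k+1) a' l₀ ha'n hl₀n hMa' hMl₀ htsa' htea' hts₀ hte₀ hr hx₀
          · have := hgreedy1 i (k+1) l₀ a' hl₀n ha'n hMl₀ hMa' hts₀ hte₀ htsa' htea' hr hxa'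
            exact absurd this (ne_of_lt hunf₀)
        -- all other members of U get zero at slot k+1
        have hzero : ∀ l ∈ U, l ≠ l₀ → x l (k+1) = 0 := by
          intro l hlU hlne
          rcases (hnonneg l (k+1)).lt_or_eq with hxl | hxl
          · exfalso
            have hlmem := hlU
            simp only [hUdef, Finset.mem_filter, Finset.mem_range] at hlmem
            obtain ⟨hln, hMl, hunfl⟩ := hlmem
            have htsl : ts l ≤ k + 1 := hts l (k+1) hxl
            have htel : k + 1 ≤ te l := hte l (k+1) hxl
            rcases htri l l₀ hlne with hr | hr
            · have := hgreedy1 i (k+1) l l₀ hln hl₀n hMl hMl₀ htsl htel hts₀ hte₀ hr hx₀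
              exact absurd this (ne_of_lt hunfl)
            · have := hgreedy1 i (k+1) l₀ l hl₀n hln hMl₀ hMl hts₀ hte₀ htsl htel hr hxl
              exact absurd this (ne_of_lt hunf₀)
          · exact hxl.symm
        -- split the sum
        have hsum_split : ∑ l ∈ U, (∑ t' ∈ Finset.Icc 1 (k+1), x l t')
            = (∑ l ∈ U, ∑ t' ∈ Finset.Icc 1 k, x l t') + x l₀ (k+1) := by
          have h1 : ∑ l ∈ U, (∑ t' ∈ Finset.Icc 1 (k+1), x l t')
              = ∑ l ∈ U, ((∑ t' ∈ Finset.Icc 1 k, x l t') + x l (k+1)) :=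
            Finset.sum_congr rfl fun l _ => hstep l k
          rw [h1, Finset.sum_add_distrib]
          congr 1
          exact Finset.sum_eq_single_of_mem l₀ hl₀U hzero
        -- a' is in V but not in U
        have ha'cum : ∑ t' ∈ Finset.Icc 1 k, x a' t'
            = (∑ t' ∈ Finset.Icc 1 L, x a' t') - x a' (k+1) := by
          have := hstep a' k
          rw [hfa'] at this
          linarith
        have ha'V : a' ∈ V := by
          simp only [hVdef, Finset.mem_filter, Finset.mem_range]
          refine ⟨ha'n, hMa', ?_⟩
          rw [ha'cum]; linarith
        have ha'U : a' ∉ U := by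
          simp only [hUdef, Finset.mem_filter, Finset.mem_range]
          intro h
          rw [hfa'] at h
          exact lt_irrefl _ h.2.2
        have h1 : (∑ l ∈ U, ∑ t' ∈ Finset.Icc 1 k, x l t')
            + (∑ t' ∈ Finset.Icc 1 k, x a' t') ≤ (k : ℝ) * γ := by
          have heq : (∑ t' ∈ Finset.Icc 1 k, x a' t')
              + (∑ l ∈ U, ∑ t' ∈ Finset.Icc 1 k, x l t')
              = ∑ l ∈ insert a' U, ∑ t' ∈ Finset.Icc 1 k, x l t' := by
            rw [Finset.sum_insert ha'U]
          have hsub : insert a' U ⊆ V := Finset.insert_subset ha'V hUV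
          have h2 : ∑ l ∈ insert a' U, (∑ t' ∈ Finset.Icc 1 k, x l t')
              ≤ ∑ l ∈ V, ∑ t' ∈ Finset.Icc 1 k, x l t' :=
            Finset.sum_le_sum_of_subset_of_nonneg hsub (fun l _ _ => hcum_nonneg l k)
          have h3 := ih i
          linarith
        -- capacity bound
        have h2 : x l₀ (k+1) + x a' (k+1) ≤ 1 := by
          have hpair : ({l₀, a'} : Finset ℕ) ⊆ (Finset.range n).filter (fun l => M l = i) := by
            intro l hl
            simp only [Finset.mem_insert, Finset.mem_singleton] at hl
            rcases hl with rfl | rfl <;> simp [Finset.mem_filter, Finset.mem_range, hl₀n, hMl₀, ha'n, hMa']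
          have hps : x l₀ (k+1) + x a' (k+1) = ∑ l ∈ ({l₀, a'} : Finset ℕ), x l (k+1) := by
            rw [Finset.sum_pair (Ne.symm ha'ne)]
          calc x l₀ (k+1) + x a' (k+1) = _ := hps
          _ ≤ ∑ l ∈ (Finset.range n).filter (fun l => M l = i), x l (k+1) :=
            Finset.sum_le_sum_of_subset_of_nonneg hpair (fun l _ _ => hnonneg l (k+1))
          _ ≤ 1 := hcap i (k+1)
        have h3 : 1 - γ - (∑ t' ∈ Finset.Icc 1 k, x a' t') ≤ x a' (k+1) := by
          have := htot_lb a' ha'n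
          rw [ha'cum]; linarith
        rw [hsum_split]
        push_cast
        linarith
      · push_neg at hpos
        have hz : ∀ l ∈ U, x l (k+1) = 0 := by
          intro l hl
          exact le_antisymm (hpos l hl) (hnonneg l (k+1))
        have : ∑ l ∈ U, (∑ t' ∈ Finset.Icc 1 (k+1), x l t')
            = ∑ l ∈ U, ∑ t' ∈ Finset.Icc 1 k, x l t' := by
          apply Finset.sum_congr rfl
          intro l hl
          rw [hstep l k, hz l hl, add_zero]
        rw [this]
        have h2 : ∑ l ∈ U, (∑ t' ∈ Finset.Icc 1 k, x l t')
            ≤ ∑ l ∈ V, ∑ t' ∈ Finset.Icc 1 k, x l t' :=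
          Finset.sum_le_sum_of_subset_of_nonneg hUV (fun l _ _ => hcum_nonneg l k)
        have h3 := ih i
        push_cast
        nlinarith
  -- FINAL ARGUMENT
  intro i t ht1 ht2
  by_contra hcard
  push_neg at hcard
  obtain ⟨a, b, c, ha, hb, hc, hab, hac, hbc⟩ := Finset.two_lt_card_iff.mp hcard
  obtain ⟨k, rfl⟩ : ∃ k, t = k + 1 := ⟨t - 1, by omega⟩
  simp only [Finset.mem_filter, Finset.mem_range] at ha hb hc
  -- numeric facts
  have hLpos : (1:ℝ) ≤ (L:ℝ) := by exact_mod_cast le_trans ht1 ht2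
  have hnpos : (1:ℝ) ≤ (n:ℝ) := by exact_mod_cast hn
  have h10 : (1:ℝ) / (10 * n) ≤ 1 / 10 := by
    apply one_div_le_one_div_of_le <;> linarith
  have hγL10 : γ * L ≤ 1/10 := le_trans hγL h10
  have hγ10 : γ ≤ 1/10 := by nlinarith
  have hkγ : (k:ℝ) * γ ≤ 1/10 := by
    have hk : (k:ℝ) ≤ (L:ℝ) := by exact_mod_cast le_trans (Nat.le_succ k) ht2
    nlinarith
  -- main contradiction builder
  have main : ∀ p q r : ℕ, p < n → q < n → r < n → M p = i → M q = i → M r = i →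
      0 < x p (k+1) → 0 < x q (k+1) → 0 < x r (k+1) → p ≠ q → p ≠ r → q ≠ r →
      (∑ t' ∈ Finset.Icc 1 (k+1), x p t' = ∑ t' ∈ Finset.Icc 1 L, x p t') →
      (∑ t' ∈ Finset.Icc 1 (k+1), x q t' = ∑ t' ∈ Finset.Icc 1 L, x q t') → False := by
    intro p q r hpn hqn hrn hMp hMq hMr hxp hxq hxr hpq hpr hqr hfp hfq
    have hpcum : ∑ t' ∈ Finset.Icc 1 k, x p t'
        = (∑ t' ∈ Finset.Icc 1 L, x p t') - x p (k+1) := by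
      have := hstep p k; rw [hfp] at this; linarith
    have hqcum : ∑ t' ∈ Finset.Icc 1 k, x q t'
        = (∑ t' ∈ Finset.Icc 1 L, x q t') - x q (k+1) := by
      have := hstep q k; rw [hfq] at this; linarith
    have hpV : p ∈ (Finset.range n).filter
        (fun l => M l = i ∧ (∑ t' ∈ Finset.Icc 1 k, x l t') < ∑ t' ∈ Finset.Icc 1 L, x l t') := by
      simp only [Finset.mem_filter, Finset.mem_range]
      exact ⟨hpn, hMp, by rw [hpcum]; linarith⟩
    have hqV : q ∈ (Finset.range n).filter
        (fun l => M l = i ∧ (∑ t' ∈ Finset.Icc 1 k, x l t') < ∑ t' ∈ Finset.Icc 1 L, x l t') := by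
      simp only [Finset.mem_filter, Finset.mem_range]
      exact ⟨hqn, hMq, by rw [hqcum]; linarith⟩
    have hpairV : (∑ t' ∈ Finset.Icc 1 k, x p t') + (∑ t' ∈ Finset.Icc 1 k, x q t')
        ≤ (k:ℝ) * γ := by
      have heq : (∑ t' ∈ Finset.Icc 1 k, x p t') + (∑ t' ∈ Finset.Icc 1 k, x q t')
          = ∑ l ∈ ({p, q} : Finset ℕ), ∑ t' ∈ Finset.Icc 1 k, x l t' := by
        rw [Finset.sum_pair hpq]
      have hsub : ({p, q} : Finset ℕ) ⊆ (Finset.range n).filter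
          (fun l => M l = i ∧ (∑ t' ∈ Finset.Icc 1 k, x l t') < ∑ t' ∈ Finset.Icc 1 L, x l t') := by
        intro l hl
        simp only [Finset.mem_insert, Finset.mem_singleton] at hl
        rcases hl with rfl | rfl
        · exact hpV
        · exact hqV
      have h2 : ∑ l ∈ ({p, q} : Finset ℕ), (∑ t' ∈ Finset.Icc 1 k, x l t')
          ≤ ∑ l ∈ (Finset.range n).filter
            (fun l => M l = i ∧ (∑ t' ∈ Finset.Icc 1 k, x l t') < ∑ t' ∈ Finset.Icc 1 L, x l t'),
            ∑ t' ∈ Finset.Icc 1 k, x l t' :=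
        Finset.sum_le_sum_of_subset_of_nonneg hsub (fun l _ _ => hcum_nonneg l k)
      have h3 := key k i
      linarith
    have hcap3 : x p (k+1) + x q (k+1) + x r (k+1) ≤ 1 := by
      have hsub : ({p, q, r} : Finset ℕ) ⊆ (Finset.range n).filter (fun l => M l = i) := by
        intro l hl
        simp only [Finset.mem_insert, Finset.mem_singleton] at hl
        rcases hl with rfl | rfl | rfl <;>
          simp [Finset.mem_filter, Finset.mem_range, hpn, hMp, hqn, hMq, hrn, hMr]
      have heq : ∑ l ∈ ({p, q, r} : Finset ℕ), x l (k+1)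
          = x p (k+1) + (x q (k+1) + x r (k+1)) := by
        rw [Finset.sum_insert (by simp [hpq, hpr]), Finset.sum_pair hqr]
      have h2 : ∑ l ∈ ({p, q, r} : Finset ℕ), x l (k+1)
          ≤ ∑ l ∈ (Finset.range n).filter (fun l => M l = i), x l (k+1) :=
        Finset.sum_le_sum_of_subset_of_nonneg hsub (fun l _ _ => hnonneg l (k+1))
      have h3 := hcap i (k+1)
      linarith
    have hlbp := htot_lb p hpn
    have hlbq := htot_lb q hqn
    -- x p (k+1) = tot p - cum_k p ≥ 1 - γ - cum_k p, similarly for q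
    have hxp' : 1 - γ - (∑ t' ∈ Finset.Icc 1 k, x p t') ≤ x p (k+1) := by
      rw [hpcum]; linarith
    have hxq' : 1 - γ - (∑ t' ∈ Finset.Icc 1 k, x q t') ≤ x q (k+1) := by
      rw [hqcum]; linarith
    linarith
  -- pairwise finishing disjunctions
  have hfin : ∀ p q : ℕ, p < n → q < n → M p = i → M q = i →
      0 < x p (k+1) → 0 < x q (k+1) → p ≠ q →
      (∑ t' ∈ Finset.Icc 1 (k+1), x p t' = ∑ t' ∈ Finset.Icc 1 L, x p t') ∨
      (∑ t' ∈ Finset.Icc 1 (k+1), x q t' = ∑ t' ∈ Finset.Icc 1 L, x q t') := by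
    intro p q hpn hqn hMp hMq hxp hxq hpq
    have htsp := hts p (k+1) hxp
    have htep := hte p (k+1) hxp
    have htsq := hts q (k+1) hxq
    have hteq := hte q (k+1) hxq
    rcases htri p q hpq with hr | hr
    · exact Or.inl (hgreedy1 i (k+1) p q hpn hqn hMp hMq htsp htep htsq hteq hr hxq)
    · exact Or.inr (hgreedy1 i (k+1) q p hqn hpn hMq hMp htsq hteq htsp htep hr hxp)
  obtain ⟨han, hMa, hxa⟩ := ha
  obtain ⟨hbn, hMb, hxb⟩ := hb
  obtain ⟨hcn, hMc, hxc⟩ := hc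
  rcases hfin a b han hbn hMa hMb hxa hxb hab with h1 | h1 <;>
    rcases hfin a c han hcn hMa hMc hxa hxc hac with h2 | h2 <;>
    rcases hfin b c hbn hcn hMb hMc hxb hxc hbc with h3 | h3
  · exact main a b c han hbn hcn hMa hMb hMc hxa hxb hxc hab hac hbc h1 h3
  · exact main a c b han hcn hbn hMa hMc hMb hxa hxc hxb hac hab (Ne.symm hbc) h1 h3
  · exact main a c b han hcn hbn hMa hMc hMb hxa hxc hxb hac hab (Ne.symm hbc) h1 h2
  · exact main a c b han hcn hbn hMa hMc hMb hxa hxc hxb hac hab (Ne.symm hbc) h1 h3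
  · exact main a b c han hbn hcn hMa hMb hMc hxa hxb hxc hab hac hbc h2 h3
  · exact main a c b han hcn hbn hMa hMc hMb hxa hxc hxb hac hab (Ne.symm hbc) h2 h3
  · exact main b c a hbn hcn han hMb hMc hMa hxb hxc hxa hbc (Ne.symm hab) (Ne.symm hac) h3 h2
  · exact main b c a hbn hcn han hMb hMc hMa hxb hxc hxa hbc (Ne.symm hab) (Ne.symm hac) h1 h3
end

section
/- If a fractional UMPS schedule x_{l,t} over L time slots processes at most 2 jobs per machine per slot, respects precedences (x_{l₁,t} > 0 and j_{l₁} ≺ j_{l₂} imply x_{l₂,t'} = 0 for t' ≤ t), and every job receives positive total processing, then there is a feasible integral UMPS schedule of the n unit-length jobs with makespan at most 2L: schedule the (at most 2) jobs with positive x in slot t of machine i integrally in slots 2t−1 and 2t. -/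
open scoped Classical

/-- A fractional UMPS schedule of `n` unit-length jobs over `L` time slots
that processes at most 2 jobs per machine per slot, respects precedences, and gives
every job some positive processing, can be rounded to a feasible integral UMPS
schedule with makespan at most `2L`. -/
theorem fractional_to_integral_doubling
    (n L : ℕ)
    (x : ℕ → ℕ → ℝ) (M : ℕ → ℕ) (prec : ℕ → ℕ → Prop)
    (hnonneg : ∀ l t, 0 ≤ x l t)
    (hsupp : ∀ l t, 0 < x l t → l < n ∧ 1 ≤ t ∧ t ≤ L)
    -- at most 2 jobs per machine per slot
    (htwo : ∀ i t, ((Finset.range n).filter (fun l => M l = i ∧ 0 < x l t)).card ≤ 2)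
    -- precedence respect
    (hprec : ∀ l₁ l₂ t t', prec l₁ l₂ → 0 < x l₁ t → t' ≤ t → x l₂ t' = 0)
    -- every job receives positive total processing
    (hpos : ∀ l, l < n → ∃ t, 1 ≤ t ∧ t ≤ L ∧ 0 < x l t) :
    ∃ σ : ℕ → ℕ,
      (∀ l, l < n → 1 ≤ σ l ∧ σ l ≤ 2 * L) ∧
      (∀ l₁ l₂, l₁ < n → l₂ < n → l₁ ≠ l₂ → M l₁ = M l₂ → σ l₁ ≠ σ l₂) ∧
      (∀ l₁ l₂, l₁ < n → l₂ < n → prec l₁ l₂ → σ l₁ < σ l₂) := by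
  classical
  have hpos' : ∀ l, ∃ t, l < n → (1 ≤ t ∧ t ≤ L ∧ 0 < x l t) := by
    intro l
    by_cases h : l < n
    · obtain ⟨t, ht⟩ := hpos l h; exact ⟨t, fun _ => ht⟩
    · exact ⟨1, fun h' => absurd h' h⟩
  choose τ hτ using hpos'
  set T : ℕ → Finset ℕ :=
    fun l => (Finset.range n).filter (fun l' => M l' = M l ∧ τ l' = τ l) with hT
  have hmemT : ∀ l, l < n → l ∈ T l := by
    intro l hl
    simp [hT, Finset.mem_filter, hl]
  have hTcard : ∀ l, l < n → (T l).card ≤ 2 := by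
    intro l hl
    refine le_trans (Finset.card_le_card ?_) (htwo (M l) (τ l))
    intro l' hl'
    simp only [hT, Finset.mem_filter, Finset.mem_range] at hl' ⊢
    obtain ⟨hln, hM, hτeq⟩ := hl'
    exact ⟨hln, hM, hτeq ▸ (hτ l' hln).2.2⟩
  set σ : ℕ → ℕ :=
    fun l => if ∀ l' ∈ T l, l ≤ l' then 2 * τ l - 1 else 2 * τ l with hσ
  have hσrange : ∀ l, 2 * τ l - 1 ≤ σ l ∧ σ l ≤ 2 * τ l := by
    intro l
    by_cases h : ∀ l' ∈ T l, l ≤ l'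
    · rw [hσ]; simp only [if_pos h]; omega
    · rw [hσ]; simp only [if_neg h]; omega
  refine ⟨σ, ?_, ?_, ?_⟩
  · intro l hl
    obtain ⟨h1, h2, _⟩ := hτ l hl
    obtain ⟨ha, hb⟩ := hσrange l
    omega
  · intro l₁ l₂ h1 h2 hne hM
    obtain ⟨ht1, _, _⟩ := hτ l₁ h1
    obtain ⟨ht2, _, _⟩ := hτ l₂ h2
    by_cases hτeq : τ l₁ = τ l₂
    · -- same set T
      have hTeq : T l₁ = T l₂ := by simp [hT, hM, hτeq]
      have hm1 : l₁ ∈ T l₁ := hmemT l₁ h1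
      have hm2 : l₂ ∈ T l₁ := hTeq ▸ hmemT l₂ h2
      have hsub : ({l₁, l₂} : Finset ℕ) ⊆ T l₁ := by
        intro z hz
        simp only [Finset.mem_insert, Finset.mem_singleton] at hz
        rcases hz with rfl | rfl
        · exact hm1
        · exact hm2
      have hcard2 : ({l₁, l₂} : Finset ℕ).card = 2 := by
        rw [Finset.card_insert_of_notMem (by simpa using hne), Finset.card_singleton]
      have hTeq2 : T l₁ = {l₁, l₂} :=
        (Finset.eq_of_subset_of_card_le hsub (hcard2 ▸ hTcard l₁ h1)).symm
      have hmemiff : ∀ z, z ∈ T l₁ ↔ (z = l₁ ∨ z = l₂) := by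
        intro z; rw [hTeq2]; simp
      rcases Nat.lt_or_ge l₁ l₂ with hlt | hge
      · have c1 : ∀ l' ∈ T l₁, l₁ ≤ l' := by
          intro l' hl'; rcases (hmemiff l').1 hl' with rfl | rfl <;> omega
        have c2 : ¬ ∀ l' ∈ T l₂, l₂ ≤ l' := by
          intro h
          have := h l₁ (hTeq ▸ hm1)
          omega
        rw [hσ]; simp only [if_pos c1, if_neg c2]; omega
      · have hlt : l₂ < l₁ := by omega
        have c2 : ∀ l' ∈ T l₂, l₂ ≤ l' := by
          intro l' hl'
          rw [← hTeq] at hl'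
          rcases (hmemiff l').1 hl' with rfl | rfl <;> omega
        have c1 : ¬ ∀ l' ∈ T l₁, l₁ ≤ l' := by
          intro h
          have := h l₂ hm2
          omega
        rw [hσ]; simp only [if_neg c1, if_pos c2, hτeq]; omega
    · -- different τ : the pairs {2t-1, 2t} are disjoint
      obtain ⟨ha1, hb1⟩ := hσrange l₁
      obtain ⟨ha2, hb2⟩ := hσrange l₂
      omega
  · intro l₁ l₂ h1 h2 hp
    obtain ⟨ht1, _, hx1⟩ := hτ l₁ h1
    obtain ⟨ht2, _, hx2⟩ := hτ l₂ h2
    have hlt : τ l₁ < τ l₂ := by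
      by_contra h
      push_neg at h
      have := hprec l₁ l₂ (τ l₁) (τ l₂) hp hx1 h
      exact absurd this (ne_of_gt hx2)
    obtain ⟨ha1, hb1⟩ := hσrange l₁
    obtain ⟨ha2, hb2⟩ := hσrange l₂
    omega
end

section
/- Completeness of the k-partite reduction (timing inequality): let Q = k, ε = 1/k, and suppose a k-partite graph on parts V_1,...,V_k each of size n admits partitions V_i = V_{i,0} ∪ ... ∪ V_{i,Q−1} with |V_{i,j}| ≥ (1−ε)n/Q for all i,j, and no edge between V_{i,j₁} and V_{i+1,j₂} when j₁ > j₂. Define t_i = (i−1)·n·(ε + 1/Q). Then for every edge (u,v) with u ∈ V_{i,j₁}, v ∈ V_{i+1,j₂} (so j₁ ≤ j₂), we have t_{i+1} + ∑_{j<j₂} |V_{i+1,j}| ≥ t_i + ∑_{j≤j₁} |V_{i,j}|, i.e., v's earliest start time is no earlier than u's latest completion time in the staggered schedule. -/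
/-- Completeness of the k-partite reduction (timing inequality).
With `Q = k`, `ε = 1/k`, block sizes `a i j = |V_{i,j}|` satisfying
`∑_{j<k} a i j = n` and `a i j ≥ (1-ε)n/Q`, and staggered start times
`t_i = (i-1)·n·(ε + 1/Q)`, for every `j₁ ≤ j₂ < k` (as given by an edge of the
YES-case partition) we have
`t_{i+1} + ∑_{j<j₂} a_{i+1,j} ≥ t_i + ∑_{j≤j₁} a_{i,j}`. -/
theorem kpartite_timing_inequality
    (k n : ℕ) (hk : 1 ≤ k)
    (a : ℕ → ℕ → ℕ)
    (hsum : ∀ i, 1 ≤ i → i ≤ k → ∑ j ∈ Finset.range k, a i j = n)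
    (hlb : ∀ i j, 1 ≤ i → i ≤ k → j < k →
      (1 - 1 / (k : ℝ)) * n / k ≤ (a i j : ℝ))
    (i j₁ j₂ : ℕ) (hi : 1 ≤ i) (hik : i + 1 ≤ k) (hj : j₁ ≤ j₂) (hj₂ : j₂ < k) :
    ((i : ℝ) - 1) * n * (1 / k + 1 / k) + ∑ j ∈ Finset.range (j₁ + 1), (a i j : ℝ)
      ≤ (((i + 1 : ℕ) : ℝ) - 1) * n * (1 / k + 1 / k)
          + ∑ j ∈ Finset.range j₂, (a (i + 1) j : ℝ) := by
  have hk1 : (1:ℝ) ≤ (k:ℝ) := by exact_mod_cast hk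
  have hkpos : (0:ℝ) < (k:ℝ) := by linarith
  set c : ℝ := (1 - 1/(k:ℝ)) * n / k with hc
  have hc0 : 0 ≤ c := by
    have h1 : (1:ℝ)/k ≤ 1 := by
      rw [div_le_one hkpos]; exact hk1
    exact div_nonneg (mul_nonneg (by linarith) (Nat.cast_nonneg n)) (le_of_lt hkpos)
  have hsub : Finset.range (j₁+1) ⊆ Finset.range k := Finset.range_subset_range.mpr (by omega)
  have hsplit : ∑ j ∈ Finset.range k \ Finset.range (j₁+1), (a i j:ℝ)
      + ∑ j ∈ Finset.range (j₁+1), (a i j:ℝ) = (n:ℝ) := by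
    rw [Finset.sum_sdiff hsub]
    exact_mod_cast hsum i hi (by omega)
  have hcard : (Finset.range k \ Finset.range (j₁+1)).card = k - (j₁+1) := by
    rw [Finset.card_sdiff_of_subset hsub, Finset.card_range, Finset.card_range]
  have h1 : ((k - (j₁+1) : ℕ) : ℝ) * c
      ≤ ∑ j ∈ Finset.range k \ Finset.range (j₁+1), (a i j : ℝ) := by
    calc ((k - (j₁+1):ℕ):ℝ) * c = ∑ _j ∈ Finset.range k \ Finset.range (j₁+1), c := by
          rw [Finset.sum_const, hcard]; simp [mul_comm]
      _ ≤ _ := Finset.sum_le_sum (fun j hjm => by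
          have h := Finset.mem_sdiff.mp hjm
          have h2 := Finset.mem_range.mp h.1
          exact hlb i j hi (by omega) h2)
  have h2 : (j₂ : ℝ) * c ≤ ∑ j ∈ Finset.range j₂, (a (i+1) j : ℝ) := by
    calc (j₂:ℝ) * c = ∑ _j ∈ Finset.range j₂, c := by
          rw [Finset.sum_const, Finset.card_range]; simp [mul_comm]
      _ ≤ _ := Finset.sum_le_sum (fun j hjm => by
          have h2 := Finset.mem_range.mp hjm
          exact hlb (i+1) j (by omega) hik (by omega))
  have hm : ((k - (j₁+1) : ℕ) : ℝ) = (k:ℝ) - (j₁:ℝ) - 1 := by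
    have h : j₁ + 1 ≤ k := by omega
    push_cast [Nat.cast_sub h]; ring
  have hj₂' : (j₁:ℝ) ≤ (j₂:ℝ) := by exact_mod_cast hj
  have hkey : (n:ℝ) ≤ (n:ℝ) * (1/k + 1/k) + (((k:ℝ) - j₁ - 1) + j₂) * c := by
    have hcoef : ((k:ℝ) - 1) ≤ ((k:ℝ) - j₁ - 1) + j₂ := by linarith
    have heq : (n:ℝ) * (1/k + 1/k) + ((k:ℝ)-1) * c = n + n/((k:ℝ)*k) := by
      rw [hc]; field_simp; ring
    have hmono : ((k:ℝ)-1) * c ≤ (((k:ℝ) - j₁ - 1) + j₂) * c :=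
      mul_le_mul_of_nonneg_right hcoef hc0
    have hpos : 0 ≤ (n:ℝ)/((k:ℝ)*k) := by positivity
    linarith
  push_cast
  nlinarith [h1, h2, hsplit, hkey, hm]
end

section
/- Completeness of the k-partite reduction (makespan bound): under the YES-case hypotheses of the previous statement with Q = k and ε = 1/k, the staggered schedule of the derived UMPS instance (n·k unit jobs, vertex u ∈ V_i assignable only to machine i, precedence u ≺ v for each edge (u,v) with u ∈ V_i, v ∈ V_{i+1}) is feasible and has makespan at most t_k + n = (k−1)·n·(1/k + 1/k) + n ≤ 3n. -/
open scoped Classical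

/-- Completeness of the k-partite reduction (makespan bound).
Under the YES-case hypotheses with `Q = k` and `ε = 1/k` (parts `V_i` of size `n`
with a block-coloring `c i · : V_i → {0,...,k-1}`, blocks of size at least `(1-ε)n/Q`,
and every edge `(u,v)` from `V_i` to `V_{i+1}` satisfying `c i u ≤ c (i+1) v`),
the derived UMPS instance (`n·k` unit jobs, vertex `v ∈ V_i` only on machine `i`,
precedence `u ≺ v` for each edge) admits a feasible schedule with makespan at
most `3n`. -/
theorem kpartite_completeness_makespan
    (k n : ℕ) (hk : 1 ≤ k)
    (c : ℕ → ℕ → ℕ)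
    (hcolor : ∀ i v, 1 ≤ i → i ≤ k → v < n → c i v < k)
    (hblock : ∀ i j, 1 ≤ i → i ≤ k → j < k →
      (1 - 1 / (k : ℝ)) * n / k ≤
        (((Finset.range n).filter (fun v => c i v = j)).card : ℝ))
    (E : ℕ → ℕ → ℕ → Prop)  -- E i u v : edge between u ∈ V_i and v ∈ V_{i+1}
    (hyes : ∀ i u v, 1 ≤ i → i + 1 ≤ k → u < n → v < n → E i u v →
      c i u ≤ c (i + 1) v) :
    ∃ s : ℕ → ℕ → ℝ,  -- s i v : start time of the unit job of vertex v ∈ V_i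
      (∀ i v, 1 ≤ i → i ≤ k → v < n → 0 ≤ s i v) ∧
      -- precedences: each edge forces u to finish before v starts
      (∀ i u v, 1 ≤ i → i + 1 ≤ k → u < n → v < n → E i u v →
        s i u + 1 ≤ s (i + 1) v) ∧
      -- unit jobs of V_i, all on machine i, occupy disjoint intervals
      (∀ i u v, 1 ≤ i → i ≤ k → u < n → v < n → u ≠ v →
        (s i u + 1 ≤ s i v ∨ s i v + 1 ≤ s i u)) ∧
      -- makespan at most 3n
      (∀ i v, 1 ≤ i → i ≤ k → v < n → s i v + 1 ≤ 3 * n) := by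
  classical
  have hkpos : (0:ℝ) < k := by exact_mod_cast hk
  have hk1 : (1:ℝ) ≤ k := by exact_mod_cast hk
  have hn0 : (0:ℝ) ≤ n := Nat.cast_nonneg n
  set m : ℝ := (1 - 1 / (k : ℝ)) * n / k with hm_def
  have hm0 : 0 ≤ m := by
    have : (1:ℝ)/k ≤ 1 := by
      rw [div_le_one hkpos]; exact hk1
    have h1 : (0:ℝ) ≤ 1 - 1/k := by linarith
    positivity
  -- position of v within machine i, sorted lexicographically by (color, index)
  set pos : ℕ → ℕ → ℕ := fun i v =>
    ((Finset.range n).filter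
      (fun w => c i w < c i v ∨ (c i w = c i v ∧ w < v))).card with hpos_def
  -- counting lower bound: blocks of colors in S cover at least |S| * m vertices
  have hcount : ∀ i, 1 ≤ i → i ≤ k → ∀ S : Finset ℕ, S ⊆ Finset.range k →
      (S.card : ℝ) * m ≤
        (((Finset.range n).filter (fun w => c i w ∈ S)).card : ℝ) := by
    intro i hi1 hik S hS
    have h1 : ((Finset.range n).filter (fun w => c i w ∈ S)).card
        = ∑ j ∈ S, (((Finset.range n).filter (fun w => c i w ∈ S)).filter
            (fun w => c i w = j)).card := by
      apply Finset.card_eq_sum_card_fiberwise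
      intro x hx
      exact (Finset.mem_filter.mp hx).2
    have h2 : ∀ j ∈ S, (((Finset.range n).filter (fun w => c i w ∈ S)).filter
            (fun w => c i w = j)) = (Finset.range n).filter (fun w => c i w = j) := by
      intro j hj
      ext w
      simp only [Finset.mem_filter]
      constructor
      · rintro ⟨⟨hw, -⟩, he⟩; exact ⟨hw, he⟩
      · rintro ⟨hw, he⟩; exact ⟨⟨hw, he ▸ hj⟩, he⟩
    have h3 : ∑ j ∈ S, (((Finset.range n).filter (fun w => c i w ∈ S)).filter
            (fun w => c i w = j)).card
        = ∑ j ∈ S, ((Finset.range n).filter (fun w => c i w = j)).card :=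
      Finset.sum_congr rfl (fun j hj => by rw [h2 j hj])
    rw [h1, h3]
    push_cast
    calc (S.card : ℝ) * m = ∑ _j ∈ S, m := by rw [Finset.sum_const, nsmul_eq_mul]
      _ ≤ ∑ j ∈ S, (((Finset.range n).filter (fun w => c i w = j)).card : ℝ) := by
          apply Finset.sum_le_sum
          intro j hj
          exact hblock i j hi1 hik (Finset.mem_range.mp (hS hj))
  -- pos v + 1 ≤ n
  have hpos_lt : ∀ i v, v < n → pos i v + 1 ≤ n := by
    intro i v hv
    have hnotmem : v ∉ (Finset.range n).filter
        (fun w => c i w < c i v ∨ (c i w = c i v ∧ w < v)) := by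
      simp [Finset.mem_filter]
    have hsub : insert v ((Finset.range n).filter
        (fun w => c i w < c i v ∨ (c i w = c i v ∧ w < v))) ⊆ Finset.range n := by
      apply Finset.insert_subset (Finset.mem_range.mpr hv) (Finset.filter_subset _ _)
    have := Finset.card_le_card hsub
    rw [Finset.card_insert_of_notMem hnotmem, Finset.card_range] at this
    simpa [hpos_def] using this
  -- strict lexicographic monotonicity of pos
  have hpos_mono : ∀ i u v, u < n → v < n →
      (c i u < c i v ∨ (c i u = c i v ∧ u < v)) → pos i u + 1 ≤ pos i v := by
    intro i u v hu hv hlex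
    have hnotmem : u ∉ (Finset.range n).filter
        (fun w => c i w < c i u ∨ (c i w = c i u ∧ w < u)) := by
      simp [Finset.mem_filter]
    have hsub : insert u ((Finset.range n).filter
        (fun w => c i w < c i u ∨ (c i w = c i u ∧ w < u)))
        ⊆ (Finset.range n).filter
          (fun w => c i w < c i v ∨ (c i w = c i v ∧ w < v)) := by
      apply Finset.insert_subset
      · simp only [Finset.mem_filter, Finset.mem_range]
        exact ⟨hu, hlex⟩
      · intro w hw
        simp only [Finset.mem_filter] at hw ⊢
        refine ⟨hw.1, ?_⟩
        rcases hw.2 with h | ⟨h1, h2⟩ <;> rcases hlex with h' | ⟨h1', h2'⟩ <;> omega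
    have := Finset.card_le_card hsub
    rw [Finset.card_insert_of_notMem hnotmem] at this
    simpa [hpos_def] using this
  refine ⟨fun i v => ((i - 1 : ℕ) : ℝ) * (2 * n / k) + pos i v, ?_, ?_, ?_, ?_⟩
  · -- nonnegativity
    intro i v _ _ _
    have h1 : (0:ℝ) ≤ ((i - 1 : ℕ) : ℝ) * (2 * n / k) := by positivity
    have h2 : (0:ℝ) ≤ (pos i v : ℝ) := Nat.cast_nonneg _
    linarith
  · -- precedences
    intro i u v hi1 hik1 hu hv hE
    have hik : i ≤ k := by omega
    have ha : c i u < k := hcolor i u hi1 hik hu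
    have hb : c (i+1) v < k := hcolor (i+1) v (by omega) hik1 hv
    have hab : c i u ≤ c (i+1) v := hyes i u v hi1 hik1 hu hv hE
    set a := c i u with ha_def
    set b := c (i+1) v with hb_def
    -- upper bound on pos i u
    have hle : pos i u + 1 ≤ ((Finset.range n).filter (fun w => c i w ≤ a)).card := by
      have hnotmem : u ∉ (Finset.range n).filter
          (fun w => c i w < c i u ∨ (c i w = c i u ∧ w < u)) := by
        simp [Finset.mem_filter]
      have hsub : insert u ((Finset.range n).filter
          (fun w => c i w < c i u ∨ (c i w = c i u ∧ w < u)))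
          ⊆ (Finset.range n).filter (fun w => c i w ≤ a) := by
        apply Finset.insert_subset
        · simp [Finset.mem_filter, Finset.mem_range, hu, ha_def]
        · intro w hw
          simp only [Finset.mem_filter] at hw ⊢
          exact ⟨hw.1, by rcases hw.2 with h | ⟨h1, h2⟩ <;> omega⟩
      have := Finset.card_le_card hsub
      rw [Finset.card_insert_of_notMem hnotmem] at this
      simpa [hpos_def] using this
    -- split range n by color ≤ a
    have hsplit := Finset.card_filter_add_card_filter_not
      (s := Finset.range n) (p := fun w => c i w ≤ a)
    rw [Finset.card_range] at hsplit
    have hnegeq : (Finset.range n).filter (fun w => ¬ c i w ≤ a)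
        = (Finset.range n).filter (fun w => c i w ∈ Finset.Ico (a+1) k) := by
      ext w
      simp only [Finset.mem_filter, Finset.mem_range, Finset.mem_Ico]
      constructor
      · rintro ⟨hw, hne⟩
        exact ⟨hw, by omega, hcolor i w hi1 hik hw⟩
      · rintro ⟨hw, h1, h2⟩
        exact ⟨hw, by omega⟩
    have hhigh : (((k - 1 - a : ℕ)) : ℝ) * m ≤
        (((Finset.range n).filter (fun w => ¬ c i w ≤ a)).card : ℝ) := by
      rw [hnegeq]
      have := hcount i hi1 hik (Finset.Ico (a+1) k) (by
        intro x hx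
        simp only [Finset.mem_Ico] at hx
        exact Finset.mem_range.mpr hx.2)
      rwa [Nat.card_Ico, show k - (a+1) = k - 1 - a by omega] at this
    -- lower bound on pos (i+1) v
    have hlow : ((b : ℕ) : ℝ) * m ≤ (pos (i+1) v : ℝ) := by
      have hsub : (Finset.range n).filter (fun w => c (i+1) w ∈ Finset.range b)
          ⊆ (Finset.range n).filter
            (fun w => c (i+1) w < c (i+1) v ∨ (c (i+1) w = c (i+1) v ∧ w < v)) := by
        intro w hw
        simp only [Finset.mem_filter, Finset.mem_range] at hw ⊢
        exact ⟨hw.1, Or.inl hw.2⟩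
      have h1 := hcount (i+1) (by omega) hik1 (Finset.range b)
        (Finset.range_subset_range.mpr (le_of_lt hb))
      rw [Finset.card_range] at h1
      have h2 : (((Finset.range n).filter
          (fun w => c (i+1) w ∈ Finset.range b)).card : ℝ) ≤ (pos (i+1) v : ℝ) := by
        exact_mod_cast Finset.card_le_card hsub
      linarith
    -- assemble
    have key : (pos i u : ℝ) + 1 ≤ 2 * n / k + (pos (i+1) v : ℝ) := by
      have h1 : (pos i u : ℝ) + 1 ≤
          (((Finset.range n).filter (fun w => c i w ≤ a)).card : ℝ) := by
        exact_mod_cast hle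
      have h2 : (((Finset.range n).filter (fun w => c i w ≤ a)).card : ℝ)
          + (((Finset.range n).filter (fun w => ¬ c i w ≤ a)).card : ℝ) = n := by
        exact_mod_cast hsplit
      have h3 : ((k - 1 : ℕ) : ℝ) * m ≤ ((b:ℕ) : ℝ) * m + (((k - 1 - a : ℕ)) : ℝ) * m := by
        have : ((k-1:ℕ):ℝ) ≤ ((b:ℕ):ℝ) + (((k-1-a:ℕ)):ℝ) := by
          have : (k-1 : ℕ) ≤ b + (k - 1 - a) := by omega
          exact_mod_cast this
        nlinarith
    -- n ≤ 2n/k + (k-1) m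
      have h4 : (n : ℝ) ≤ 2 * n / k + ((k - 1 : ℕ) : ℝ) * m := by
        have hc : ((k - 1 : ℕ) : ℝ) = (k : ℝ) - 1 := by
          rw [Nat.cast_sub hk, Nat.cast_one]
        rw [hc, hm_def]
        have hk2 : (0:ℝ) < (k:ℝ)^2 := by positivity
        have heq : 2 * (n:ℝ) / k + ((k:ℝ) - 1) * ((1 - 1/(k:ℝ)) * n / k) - n
            = n / (k:ℝ)^2 := by
          field_simp
          ring
        have hpos2 : (0:ℝ) ≤ n / (k:ℝ)^2 := by positivity
        linarith
      linarith
    simp only [Nat.add_sub_cancel]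
    have hci : ((i : ℕ) : ℝ) = ((i - 1 : ℕ) : ℝ) + 1 := by
      rw [Nat.cast_sub hi1, Nat.cast_one]; ring
    have hci' : ((i : ℕ) : ℝ) * (2 * n / k)
        = ((i - 1 : ℕ) : ℝ) * (2 * n / k) + 2 * n / k := by rw [hci]; ring
    rw [hci']
    linarith
  · -- disjointness on each machine
    intro i u v hi1 hik hu hv huv
    have : (c i u < c i v ∨ (c i u = c i v ∧ u < v)) ∨
        (c i v < c i u ∨ (c i v = c i u ∧ v < u)) := by omega
    rcases this with h | h
    · left
      have := hpos_mono i u v hu hv h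
      have : (pos i u : ℝ) + 1 ≤ (pos i v : ℝ) := by exact_mod_cast this
      linarith
    · right
      have := hpos_mono i v u hv hu h
      have : (pos i v : ℝ) + 1 ≤ (pos i u : ℝ) := by exact_mod_cast this
      linarith
  · -- makespan
    intro i v hi1 hik hv
    have h1 : (pos i v : ℝ) + 1 ≤ n := by exact_mod_cast hpos_lt i v hv
    have h2 : ((i - 1 : ℕ) : ℝ) * (2 * n / k) ≤ 2 * n := by
      have hle : ((i - 1 : ℕ) : ℝ) ≤ (k : ℝ) := by
        have : (i - 1 : ℕ) ≤ k := by omega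
        exact_mod_cast this
      have hd : (0:ℝ) ≤ 2 * n / k := by positivity
      calc ((i - 1 : ℕ) : ℝ) * (2 * n / k) ≤ (k : ℝ) * (2 * n / k) :=
            mul_le_mul_of_nonneg_right hle hd
        _ = 2 * n := by field_simp
    linarith
end

section
/- Completeness of the UMPS-to-related-machines reduction: if a UMPS instance I with unit-length jobs admits a feasible schedule of makespan L, then the related-machines instance I' (for each UMPS machine i, a set ℳ_i of κ^{2(m−i)} machines of speed κ^{i−1}; for each job l, a set 𝒥_l of κ^{2(m−M(l))} jobs of processing requirement κ^{M(l)−1}, with all-pairs precedences 𝒥_u ≺ 𝒥_v whenever j_u ≺ j_v) admits a feasible schedule of makespan at most L, by scheduling all of 𝒥_l on the machines ℳ_{M(l)} (one job per machine) in the time slot of j_l. -/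
/-- Completeness of the UMPS-to-related-machines reduction.
If a UMPS instance with `n` unit-length jobs (machine assignment `M : jobs → [m]`,
precedences `prec`) admits a feasible schedule `s` of makespan `L`, then the derived
related-machines instance (machines `(i,a)` with `1 ≤ i ≤ m`, `a < κ^(2(m-i))`, of
speed `κ^(i-1)`; jobs `(l,b)` with `l < n`, `b < κ^(2(m-M l))`, of processing
requirement `κ^(M l - 1)`; all-pairs precedences between the groups `𝒥_u ≺ 𝒥_v`
whenever `prec u v`) admits a feasible schedule of makespan at most `L`. -/
theorem related_machines_completeness
    (n m L : ℕ) (hm : 1 ≤ m)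
    (κ : ℕ) (hκ : κ = 10 * n ^ 3 * m)
    (M : ℕ → ℕ) (hM : ∀ l, l < n → 1 ≤ M l ∧ M l ≤ m)
    (prec : ℕ → ℕ → Prop)
    (s : ℕ → ℕ)
    (hfeas_prec : ∀ u v, u < n → v < n → prec u v → s u + 1 ≤ s v)
    (hfeas_mach : ∀ u v, u < n → v < n → u ≠ v → M u = M v → s u ≠ s v)
    (hmakespan : ∀ l, l < n → s l + 1 ≤ L) :
    ∃ (A : ℕ → ℕ → ℕ × ℕ) (σ : ℕ → ℕ → ℝ),
      -- every job (l,b) is assigned a valid machine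
      (∀ l b, l < n → b < κ ^ (2 * (m - M l)) →
        1 ≤ (A l b).1 ∧ (A l b).1 ≤ m ∧ (A l b).2 < κ ^ (2 * (m - (A l b).1))) ∧
      -- start times are nonnegative
      (∀ l b, l < n → b < κ ^ (2 * (m - M l)) → 0 ≤ σ l b) ∧
      -- precedences: all copies of u finish before any copy of v starts
      (∀ u v bu bv, u < n → v < n → bu < κ ^ (2 * (m - M u)) →
        bv < κ ^ (2 * (m - M v)) → prec u v →
        σ u bu + (κ : ℝ) ^ (M u - 1) / (κ : ℝ) ^ ((A u bu).1 - 1) ≤ σ v bv) ∧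
      -- jobs on the same machine occupy disjoint intervals
      (∀ l b l' b', l < n → l' < n → b < κ ^ (2 * (m - M l)) →
        b' < κ ^ (2 * (m - M l')) → (l, b) ≠ (l', b') → A l b = A l' b' →
        (σ l b + (κ : ℝ) ^ (M l - 1) / (κ : ℝ) ^ ((A l b).1 - 1) ≤ σ l' b' ∨
         σ l' b' + (κ : ℝ) ^ (M l' - 1) / (κ : ℝ) ^ ((A l' b').1 - 1) ≤ σ l b)) ∧
      -- makespan at most L
      (∀ l b, l < n → b < κ ^ (2 * (m - M l)) →
        σ l b + (κ : ℝ) ^ (M l - 1) / (κ : ℝ) ^ ((A l b).1 - 1) ≤ L) := by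
  refine ⟨fun l b => (M l, b), fun l _ => (s l : ℝ), ?_, ?_, ?_, ?_, ?_⟩
  · intro l b hl hb
    exact ⟨(hM l hl).1, (hM l hl).2, hb⟩
  · intro l b hl hb
    positivity
  · intro u v bu bv hu hv hbu hbv hp
    have hκpos : (0:ℝ) < (κ:ℝ) := by
      have : 0 < κ := by
        subst hκ
        have : 0 < n := Nat.pos_of_ne_zero (by omega)
        positivity
      exact_mod_cast this
    have h1 : (κ : ℝ) ^ (M u - 1) / (κ : ℝ) ^ (M u - 1) = 1 :=
      div_self (by positivity)
    simp only [h1]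
    have := hfeas_prec u v hu hv hp
    have : (s u : ℝ) + 1 ≤ (s v : ℝ) := by exact_mod_cast this
    linarith
  · intro l b l' b' hl hl' hb hb' hne hA
    have hM1 : M l = M l' := congrArg Prod.fst hA
    have hb1 : b = b' := congrArg Prod.snd hA
    have hll' : l ≠ l' := by
      intro h; exact hne (by rw [h, hb1])
    have hsne := hfeas_mach l l' hl hl' hll' hM1
    have hκpos : 0 < κ := by
      subst hκ
      have : 0 < n := Nat.pos_of_ne_zero (by omega)
      positivity
    have h1 : (κ : ℝ) ^ (M l - 1) / (κ : ℝ) ^ (M l - 1) = 1 :=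
      div_self (by positivity)
    have h2 : (κ : ℝ) ^ (M l' - 1) / (κ : ℝ) ^ (M l' - 1) = 1 :=
      div_self (by positivity)
    simp only [h1, h2]
    rcases lt_or_gt_of_ne hsne with h | h
    · left
      have : s l + 1 ≤ s l' := h
      have : (s l : ℝ) + 1 ≤ (s l' : ℝ) := by exact_mod_cast this
      linarith
    · right
      have : s l' + 1 ≤ s l := h
      have : (s l' : ℝ) + 1 ≤ (s l : ℝ) := by exact_mod_cast this
      linarith
  · intro l b hl hb
    have hκpos : 0 < κ := by
      subst hκ
      have : 0 < n := Nat.pos_of_ne_zero (by omega)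
      positivity
    have h1 : (κ : ℝ) ^ (M l - 1) / (κ : ℝ) ^ (M l - 1) = 1 :=
      div_self (by positivity)
    simp only [h1]
    have := hmakespan l hl
    have : (s l : ℝ) + 1 ≤ (L : ℝ) := by exact_mod_cast this
    linarith
end

section
/- Swap operation preserves feasibility: let x be a fractional UMPS schedule respecting precedences, and let l₁, l₂ ∈ J(i) and slots t < t' satisfy x_{l₂,t} > 0, x_{l₁,t'} > 0, and t^s_{l₁} ≤ t < t^e_{l₁}. Setting y = min(x_{l₁,t'}, x_{l₂,t}) and updating x_{l₁,t} += y, x_{l₁,t'} −= y, x_{l₂,t} −= y, x_{l₂,t'} += y yields a schedule with the same per-slot machine loads ∑_{l∈J(i)} x_{l,s} for every slot s, the same total processing ∑_s x_{l,s} for every job, and in which no job's ending time t^e increases and no job's starting time t^s decreases; consequently the new schedule still respects precedences. -/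
open scoped Classical

/-- Start time of job `l`: first slot with positive processing. -/
noncomputable def tsOf (x : ℕ → ℕ → ℝ) (l : ℕ) : ℕ := sInf {t | 0 < x l t}

/-- Ending time of job `l`: last slot with positive processing. -/
noncomputable def teOf (x : ℕ → ℕ → ℝ) (l : ℕ) : ℕ := sSup {t | 0 < x l t}

/-- The swap operation preserves feasibility. Given a fractional UMPS
schedule `x` respecting precedences, jobs `l₁ ≠ l₂` on the same machine, and slots
`t < t'` with `x_{l₂,t} > 0`, `x_{l₁,t'} > 0`, `tᵉ_{l₁} ≤ tᵉ_{l₂}` and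
`tˢ_{l₁} ≤ t < tᵉ_{l₁}`, moving `y = min(x_{l₁,t'}, x_{l₂,t})` units of `l₁` from
`t'` to `t` and of `l₂` from `t` to `t'` keeps all per-slot machine loads and all
per-job totals unchanged, increases no ending time, decreases no starting time, and
hence still respects the precedences. -/
theorem swap_preserves_feasibility
    (n L : ℕ)
    (x : ℕ → ℕ → ℝ) (M : ℕ → ℕ) (prec : ℕ → ℕ → Prop)
    (hnonneg : ∀ l u, 0 ≤ x l u)
    (hsupp : ∀ l u, 0 < x l u → l < n ∧ 1 ≤ u ∧ u ≤ L)
    (hcap : ∀ i u, ∑ l ∈ (Finset.range n).filter (fun l => M l = i), x l u ≤ 1)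
    (hprec : ∀ a b, prec a b → teOf x a < tsOf x b)
    (l₁ l₂ t t' : ℕ)
    (hne : l₁ ≠ l₂) (hmach : M l₁ = M l₂)
    (htt' : t < t')
    (hx₂ : 0 < x l₂ t) (hx₁ : 0 < x l₁ t')
    (hts₁ : tsOf x l₁ ≤ t) (hte₁ : t < teOf x l₁)
    (hord : teOf x l₁ ≤ teOf x l₂) :
    let y := min (x l₁ t') (x l₂ t)
    let x' : ℕ → ℕ → ℝ := fun l u =>
      if l = l₁ ∧ u = t then x l u + y
      else if l = l₁ ∧ u = t' then x l u - y
      else if l = l₂ ∧ u = t then x l u - y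
      else if l = l₂ ∧ u = t' then x l u + y
      else x l u
    -- per-slot machine loads are unchanged
    (∀ i u, ∑ l ∈ (Finset.range n).filter (fun l => M l = i), x' l u
          = ∑ l ∈ (Finset.range n).filter (fun l => M l = i), x l u) ∧
    -- per-job total processing is unchanged
    (∀ l, ∑ u ∈ Finset.Icc 1 L, x' l u = ∑ u ∈ Finset.Icc 1 L, x l u) ∧
    -- no ending time increases and no starting time decreases
    (∀ l, teOf x' l ≤ teOf x l ∧ tsOf x l ≤ tsOf x' l) ∧
    -- consequently, the new schedule still respects the precedences
    (∀ a b, prec a b → teOf x' a < tsOf x' b) := by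
  intro y x'
  have hy : 0 < y := lt_min hx₁ hx₂
  have hyle1 : y ≤ x l₁ t' := min_le_left _ _
  have hyle2 : y ≤ x l₂ t := min_le_right _ _
  have hnet : t ≠ t' := htt'.ne
  have hnet' : t' ≠ t := htt'.ne'
  have hne2 : l₂ ≠ l₁ := hne.symm
  have hA : x' l₁ t = x l₁ t + y := by simp [x']
  have hB : x' l₁ t' = x l₁ t' - y := by simp [x', hnet']
  have hC : x' l₂ t = x l₂ t - y := by simp [x', hne2]
  have hD : x' l₂ t' = x l₂ t' + y := by simp [x', hne2, hnet']
  have hE : ∀ l, l ≠ l₁ → l ≠ l₂ → ∀ u, x' l u = x l u := by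
    intro l h1 h2 u; simp [x', h1, h2]
  have hF : ∀ l u, u ≠ t → u ≠ t' → x' l u = x l u := by
    intro l u h1 h2; simp [x', h1, h2]
  have hts_le : ∀ l u, 0 < x l u → tsOf x l ≤ u := fun l u h => Nat.sInf_le h
  have hle_te : ∀ l u, 0 < x l u → u ≤ teOf x l := fun l u h =>
    le_csSup ⟨L, fun v hv => (hsupp l v hv).2.2⟩ h
  -- part 1 : per-slot loads
  have part1 : ∀ i u, ∑ l ∈ (Finset.range n).filter (fun l => M l = i), x' l u
      = ∑ l ∈ (Finset.range n).filter (fun l => M l = i), x l u := by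
    intro i u
    set s := (Finset.range n).filter (fun l => M l = i) with hs
    have key : ∑ l ∈ s, (x' l u - x l u) = 0 := by
      by_cases h1 : l₁ ∈ s
      · have hMi : M l₁ = i := (Finset.mem_filter.mp h1).2
        have h2 : l₂ ∈ s := Finset.mem_filter.mpr
          ⟨Finset.mem_range.mpr (hsupp l₂ t hx₂).1, by rw [← hmach]; exact hMi⟩
        have hsub : ({l₁, l₂} : Finset ℕ) ⊆ s := by
          intro z hz
          rcases Finset.mem_insert.mp hz with rfl | hz
          · exact h1
          · rcases Finset.mem_singleton.mp hz with rfl; exact h2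
        rw [← Finset.sum_subset hsub (by
          intro l hl hnl
          have hl1 : l ≠ l₁ := by rintro rfl; exact hnl (Finset.mem_insert_self _ _)
          have hl2 : l ≠ l₂ := by
            rintro rfl; exact hnl (Finset.mem_insert_of_mem (Finset.mem_singleton_self _))
          rw [hE l hl1 hl2]; ring)]
        rw [Finset.sum_pair hne]
        by_cases hu : u = t
        · subst hu; rw [hA, hC]; ring
        · by_cases hu' : u = t'
          · subst hu'; rw [hB, hD]; ring
          · rw [hF l₁ u hu hu', hF l₂ u hu hu']; ring
      · have h2 : l₂ ∉ s := by
          intro h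
          exact h1 (Finset.mem_filter.mpr
            ⟨Finset.mem_range.mpr (hsupp l₁ t' hx₁).1,
             by rw [hmach]; exact (Finset.mem_filter.mp h).2⟩)
        apply Finset.sum_eq_zero
        intro l hl
        have hl1 : l ≠ l₁ := by rintro rfl; exact h1 hl
        have hl2 : l ≠ l₂ := by rintro rfl; exact h2 hl
        rw [hE l hl1 hl2]; ring
    rw [Finset.sum_sub_distrib] at key
    linarith
  -- part 2 : per-job totals
  have part2 : ∀ l, ∑ u ∈ Finset.Icc 1 L, x' l u = ∑ u ∈ Finset.Icc 1 L, x l u := by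
    intro l
    have htmem : t ∈ Finset.Icc 1 L :=
      Finset.mem_Icc.mpr ⟨(hsupp l₂ t hx₂).2.1, (hsupp l₂ t hx₂).2.2⟩
    have ht'mem : t' ∈ Finset.Icc 1 L :=
      Finset.mem_Icc.mpr ⟨(hsupp l₁ t' hx₁).2.1, (hsupp l₁ t' hx₁).2.2⟩
    have key : ∑ u ∈ Finset.Icc 1 L, (x' l u - x l u) = 0 := by
      have hsub : ({t, t'} : Finset ℕ) ⊆ Finset.Icc 1 L := by
        intro z hz
        rcases Finset.mem_insert.mp hz with rfl | hz
        · exact htmem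
        · rcases Finset.mem_singleton.mp hz with rfl; exact ht'mem
      rw [← Finset.sum_subset hsub (by
        intro u hu hnu
        have h1 : u ≠ t := by rintro rfl; exact hnu (Finset.mem_insert_self _ _)
        have h2 : u ≠ t' := by
          rintro rfl; exact hnu (Finset.mem_insert_of_mem (Finset.mem_singleton_self _))
        rw [hF l u h1 h2]; ring)]
      rw [Finset.sum_pair hnet]
      by_cases hl1 : l = l₁
      · subst hl1; rw [hA, hB]; ring
      · by_cases hl2 : l = l₂
        · subst hl2; rw [hC, hD]; ring
        · rw [hE l hl1 hl2 t, hE l hl1 hl2 t']; ring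
    rw [Finset.sum_sub_distrib] at key
    linarith
  -- part 3 : times
  have part3 : ∀ l, teOf x' l ≤ teOf x l ∧ tsOf x l ≤ tsOf x' l := by
    intro l
    by_cases hl1 : l = l₁
    · subst hl1
      constructor
      · apply csSup_le'
        intro u hu
        by_cases hu1 : u = t
        · subst hu1; exact hte₁.le
        · by_cases hu2 : u = t'
          · subst hu2; exact hle_te l u hx₁
          · rw [Set.mem_setOf_eq, hF l u hu1 hu2] at hu
            exact hle_te l u hu
      · apply le_csInf
        · refine ⟨t, ?_⟩
          rw [Set.mem_setOf_eq, hA]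
          have := hnonneg l t
          linarith
        · intro u hu
          by_cases hu1 : u = t
          · subst hu1; exact hts₁
          · by_cases hu2 : u = t'
            · subst hu2; exact hts_le l u hx₁
            · rw [Set.mem_setOf_eq, hF l u hu1 hu2] at hu
              exact hts_le l u hu
    · by_cases hl2 : l = l₂
      · subst hl2
        constructor
        · apply csSup_le'
          intro u hu
          by_cases hu1 : u = t
          · subst hu1; exact hle_te l u hx₂
          · by_cases hu2 : u = t'
            · subst hu2; exact (hle_te l₁ u hx₁).trans hord
            · rw [Set.mem_setOf_eq, hF l u hu1 hu2] at hu
              exact hle_te l u hu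
        · apply le_csInf
          · refine ⟨t', ?_⟩
            rw [Set.mem_setOf_eq, hD]
            have := hnonneg l t'
            linarith
          · intro u hu
            by_cases hu1 : u = t
            · subst hu1; exact hts_le l u hx₂
            · by_cases hu2 : u = t'
              · subst hu2; exact (hts_le l t hx₂).trans htt'.le
              · rw [Set.mem_setOf_eq, hF l u hu1 hu2] at hu
                exact hts_le l u hu
      · have hset : {u | 0 < x' l u} = {u | 0 < x l u} := by
          ext u; rw [Set.mem_setOf_eq, Set.mem_setOf_eq, hE l hl1 hl2]
        constructor
        · unfold teOf; rw [hset]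
        · unfold tsOf; rw [hset]
  refine ⟨part1, part2, part3, ?_⟩
  intro a b hab
  calc teOf x' a ≤ teOf x a := (part3 a).1
    _ < tsOf x b := hprec a b hab
    _ ≤ tsOf x' b := (part3 b).2
end
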